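/- Let Ω ⊆ ℝ² be open connected, u : Ω → ℝ continuous satisfying the Harnack-type property for both u and −u (nonnegativity of ±u on B(x,3r) ⊆ Ω implies sup_{B(x,r)} (±u) ≤ C inf_{B(x,r)} (±u)). Let D be the maximal open subset of Ω on which u vanishes, and suppose D ≠ ∅ and D ≠ Ω. Then for every x ∈ ∂D ∩ Ω and every δ > 0 with clos(B(x,δ)) ⊆ Ω, the set B(x, δ) \ clos(D) cannot consist only of points where u > 0, nor only of points where u < 0. -/
import Mathlib


/-- Near any boundary point of the maximal vanishing set `D`, the set
`B(x, δ) \ clos(D)` cannot consist only of points where `u > 0`, nor only of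
points where `u < 0`. -/
theorem frontier_of_vanishing_set_sees_both_signs
    (Ω : Set (EuclideanSpace ℝ (Fin 2))) (hΩ : IsOpen Ω) (hΩc : IsConnected Ω)
    (u : EuclideanSpace ℝ (Fin 2) → ℝ) (hu : ContinuousOn u Ω)
    (C : ℝ) (hC : 1 ≤ C)
    (harnack : ∀ (v : EuclideanSpace ℝ (Fin 2) → ℝ), (v = u ∨ v = -u) →
      ∀ (x : EuclideanSpace ℝ (Fin 2)) (r : ℝ), 0 < r →
        Metric.ball x (3 * r) ⊆ Ω →
        (∀ z ∈ Metric.ball x (3 * r), 0 ≤ v z) →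
        ∀ z ∈ Metric.ball x r, ∀ w ∈ Metric.ball x r, v z ≤ C * v w)
    (D : Set (EuclideanSpace ℝ (Fin 2)))
    (hD : D = ⋃₀ {B | ∃ (c : EuclideanSpace ℝ (Fin 2)) (r : ℝ), 0 < r ∧
        B = Metric.ball c r ∧ B ⊆ Ω ∧ ∀ x ∈ B, u x = 0})
    (hDne : D.Nonempty) (hDprop : D ≠ Ω) :
    ∀ x ∈ frontier D ∩ Ω, ∀ δ > (0 : ℝ),
      closure (Metric.ball x δ) ⊆ Ω →
      ¬ (∀ z ∈ Metric.ball x δ \ closure D, 0 < u z) ∧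
      ¬ (∀ z ∈ Metric.ball x δ \ closure D, u z < 0) := by
  intro x hx δ hδ hsub
  obtain ⟨hxf, hxΩ⟩ := hx
  -- basic facts
  have hDopen : IsOpen D := by
    rw [hD]
    exact isOpen_sUnion (by rintro B ⟨c, r, _, rfl, _, _⟩; exact Metric.isOpen_ball)
  have hDsubΩ : D ⊆ Ω := by
    rw [hD]; rintro z ⟨B, ⟨c, r, _, rfl, hBΩ, _⟩, hz⟩; exact hBΩ hz
  have huD : ∀ z ∈ D, u z = 0 := by
    rw [hD]; rintro z ⟨B, ⟨c, r, _, rfl, _, hu0⟩, hz⟩; exact hu0 z hz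
  have hxcl : x ∈ closure D := frontier_subset_closure hxf
  have hxnotD : x ∉ D := by
    intro hxD
    have := hDopen.frontier_eq ▸ hxf
    exact this.2 hxD
  have hballΩ : Metric.ball x δ ⊆ Ω := subset_closure.trans hsub
  -- the key claim
  have key : ∀ v, (v = u ∨ v = -u) →
      ¬ (∀ z ∈ Metric.ball x δ \ closure D, 0 < v z) := by
    intro v hv hpos
    have hvcont : ContinuousOn v Ω := by
      rcases hv with rfl | rfl
      · exact hu
      · exact hu.neg
    have hvzero : ∀ z, v z = 0 ↔ u z = 0 := by
      rcases hv with rfl | rfl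
      · intro z; rfl
      · intro z; simp
    have hvD : ∀ z ∈ D, v z = 0 := fun z hz => (hvzero z).2 (huD z hz)
    -- v = 0 on closure D ∩ Ω
    have hvclD : ∀ z ∈ closure D, z ∈ Ω → v z = 0 := by
      intro z hzcl hzΩ
      have hca : ContinuousAt v z := hvcont.continuousAt (hΩ.mem_nhds hzΩ)
      have hne : (nhds z ⊓ Filter.principal D).NeBot :=
        mem_closure_iff_clusterPt.1 hzcl
      have h1 : Filter.Tendsto v (nhds z ⊓ Filter.principal D) (nhds (v z)) :=
        hca.tendsto.mono_left inf_le_left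
      have h2 : Filter.Tendsto v (nhds z ⊓ Filter.principal D) (nhds 0) := by
        refine Filter.Tendsto.congr' ?_ tendsto_const_nhds
        exact Filter.eventually_inf_principal.2
          (Filter.Eventually.of_forall fun w hw => (hvD w hw).symm)
      exact tendsto_nhds_unique h1 h2
    -- v ≥ 0 on ball x δ
    have hnn : ∀ z ∈ Metric.ball x δ, 0 ≤ v z := by
      intro z hz
      by_cases hzc : z ∈ closure D
      · exact le_of_eq (hvclD z hzc (hballΩ hz)).symm
      · exact le_of_lt (hpos z ⟨hz, hzc⟩)
    -- Harnack on ball x (δ/3)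
    have hr : (0:ℝ) < δ / 3 := by linarith
    have h3r : 3 * (δ / 3) = δ := by ring
    have hH := harnack v hv x (δ / 3) hr (by rw [h3r]; exact hballΩ)
      (by rw [h3r]; exact hnn)
    -- pick w ∈ D close to x
    obtain ⟨w, hwD, hwd⟩ := Metric.mem_closure_iff.1 hxcl (δ / 3) hr
    have hwball : w ∈ Metric.ball x (δ / 3) := by
      rw [Metric.mem_ball, dist_comm]; exact hwd
    have hvw : v w = 0 := hvD w hwD
    have hball3 : Metric.ball x (δ / 3) ⊆ Metric.ball x δ :=
      Metric.ball_subset_ball (by linarith)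
    -- v ≡ 0 on ball x (δ/3)
    have hu0 : ∀ z ∈ Metric.ball x (δ / 3), u z = 0 := by
      intro z hz
      have hle : v z ≤ C * v w := hH z hz w hwball
      rw [hvw, mul_zero] at hle
      exact (hvzero z).1 (le_antisymm hle (hnn z (hball3 hz)))
    -- so ball x (δ/3) ⊆ D, contradicting x ∉ D
    have : Metric.ball x (δ / 3) ⊆ D := by
      rw [hD]
      exact Set.subset_sUnion_of_mem ⟨x, δ / 3, hr, rfl, hball3.trans hballΩ, hu0⟩
    exact hxnotD (this (Metric.mem_ball_self hr))
  constructor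
  · exact key u (Or.inl rfl)
  · intro h
    exact key (-u) (Or.inr rfl) fun z hz => by
      simpa using (h z hz)
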